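/- In the full Gray code of words of length n, every run (maximal block of consecutive words sharing the same first n−1 letters) contains at least one arc-disconnected word and at least two arc-connected words. -/

import Mathlib

/-- The full Gray code of words: for `n = 0` the single empty word; words of
the length-`n` code at even (0-indexed, i.e. odd 1-indexed) positions are
extended by last letters `1, 2, …, 2(n+1)-1` in increasing order, those at odd
(0-indexed) positions by the same last letters in decreasing order. -/
def grayCode : ℕ → List (List ℕ)
  | 0 => [[]]
  | n+1 =>
      ((grayCode n).zipIdx.map Prod.swap |>.map (fun p =>
        if p.1 % 2 = 0 then
          (List.range (2*n + 1)).map (fun j => p.2 ++ [j + 1])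
        else
          ((List.range (2*n + 1)).map (fun j => p.2 ++ [j + 1])).reverse)).flatten

lemma mem_grayCode_succ {n : ℕ} {a : List ℕ} :
    a ∈ grayCode (n+1) ↔ ∃ p ∈ grayCode n, ∃ j, j < 2*n+1 ∧ a = p ++ [j+1] := by
  constructor
  · intro h
    simp only [grayCode, List.mem_flatten, List.mem_map] at h
    obtain ⟨L, ⟨⟨i, q⟩, hq, rfl⟩, ha⟩ := h
    have hqm : q ∈ grayCode n := by
      obtain ⟨⟨q', i'⟩, hq', he⟩ := hq
      simp only [Prod.swap_prod_mk, Prod.mk.injEq] at he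
      obtain ⟨rfl, rfl⟩ := he
      have := List.mk_mem_zipIdx_iff_getElem?.mp hq'
      exact List.mem_of_getElem? this
    by_cases hi : i % 2 = 0 <;>
      simp only [hi, if_true, if_false, List.mem_reverse, List.mem_map, List.mem_range] at ha <;>
      · obtain ⟨j, hj, rfl⟩ := ha
        exact ⟨q, hqm, j, hj, rfl⟩
  · rintro ⟨p, hp, j, hj, rfl⟩
    obtain ⟨i, hil, hip⟩ := List.mem_iff_getElem.mp hp
    have henum : ∃ b ∈ (grayCode n).zipIdx, Prod.swap b = (i, p) :=
      ⟨(p, i), List.mk_mem_zipIdx_iff_getElem?.mpr (by simp [List.getElem?_eq_getElem hil, hip]), rfl⟩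
    show _ ∈ grayCode (n+1)
    simp only [grayCode, List.mem_flatten, List.mem_map]
    refine ⟨_, ⟨(i, p), henum, rfl⟩, ?_⟩
    by_cases hi : i % 2 = 0 <;>
      simp only [hi, if_true, if_false, List.mem_reverse, List.mem_map, List.mem_range] <;>
      exact ⟨j, hj, rfl⟩

lemma length_grayCode {n : ℕ} {a : List ℕ} (h : a ∈ grayCode n) : a.length = n := by
  induction n generalizing a with
  | zero => simp [grayCode] at h; simp [h]
  | succ n ih =>
    obtain ⟨p, hp, j, hj, rfl⟩ := mem_grayCode_succ.mp h
    simp [ih hp]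

/-- The 1-indexed `i`-th letter of a word. -/
def wd (a : List ℕ) (i : ℕ) : ℕ := a.getD (i - 1) 0

/-- A word `a₁…aₙ` is arc-disconnected if there is a `k ≥ 2` with
`a_k = 2k-1` and `a_j ≥ 2k-1` for all `j > k`. -/
def ArcDiscL (a : List ℕ) : Prop :=
  ∃ k, 2 ≤ k ∧ k ≤ a.length ∧ wd a k = 2*k - 1 ∧
    ∀ j, k < j → j ≤ a.length → 2*k - 1 ≤ wd a j

/-- Every run of the full Gray code (all words sharing the same
first `n-1` letters) contains at least one arc-disconnected word and at least
two arc-connected words. -/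
theorem stmt_15 (n : ℕ) (hn : 2 ≤ n) (a : List ℕ) (ha : a ∈ grayCode n) :
    (∃ b ∈ grayCode n, b.take (n-1) = a.take (n-1) ∧ ArcDiscL b) ∧
    (∃ b ∈ grayCode n, ∃ c ∈ grayCode n, b ≠ c ∧
      b.take (n-1) = a.take (n-1) ∧ c.take (n-1) = a.take (n-1) ∧
      ¬ ArcDiscL b ∧ ¬ ArcDiscL c) := by
  obtain ⟨m, rfl⟩ : ∃ m, n = m + 1 := ⟨n - 1, by omega⟩
  obtain ⟨p, hp, j, hj, rfl⟩ := mem_grayCode_succ.mp ha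
  have hpl : p.length = m := length_grayCode hp
  have hm : 1 ≤ m := by omega
  -- the shared prefix
  have htake : ∀ x : ℕ, (p ++ [x]).take (m+1-1) = p := by
    intro x
    have h1 : m+1-1 = p.length := by omega
    rw [h1, List.take_left]
  have hmem : ∀ x : ℕ, 1 ≤ x → x ≤ 2*m+1 → p ++ [x] ∈ grayCode (m+1) := by
    intro x h1 h2
    exact mem_grayCode_succ.mpr ⟨p, hp, x - 1, by omega, by congr; omega⟩
  have hwdlast : ∀ x : ℕ, wd (p ++ [x]) (m+1) = x := by
    intro x
    simp only [wd, Nat.add_sub_cancel, ← hpl]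
    rw [List.getD_eq_getElem _ _ (by simp)]
    simp
  have hlen : ∀ x : ℕ, (p ++ [x]).length = m + 1 := by simp [hpl]
  have hconn : ∀ x : ℕ, x ≤ 2 → ¬ ArcDiscL (p ++ [x]) := by
    intro x hx ⟨k, hk2, hkl, hwk, hall⟩
    rw [hlen] at hkl
    rcases Nat.lt_or_ge k (m+1) with hlt | hge
    · have := hall (m+1) hlt (by rw [hlen])
      rw [hwdlast] at this
      omega
    · have : k = m + 1 := by omega
      subst this
      rw [hwdlast] at hwk
      omega
  refine ⟨⟨p ++ [2*(m+1)-1], hmem _ (by omega) (by omega), by rw [htake, htake], ?_⟩,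
    ⟨p ++ [1], hmem 1 (by omega) (by omega), p ++ [2], hmem 2 (by omega) (by omega), ?_,
      by rw [htake, htake], by rw [htake, htake], hconn 1 (by omega), hconn 2 (by omega)⟩⟩
  · refine ⟨m+1, by omega, by rw [hlen], ?_, fun j h1 h2 => by rw [hlen] at h2; omega⟩
    rw [hwdlast]
  · intro h
    have := List.append_inj_right h rfl
    simp at this
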